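/- Let f : D^d → D be holomorphic on the open unit polydisc with f(0) = 0. Then the sum of the absolute values of the partial derivatives of f at 0 is at most 1: ∑_{j=1}^d |∂f/∂z_j(0)| ≤ 1. -/

import Mathlib

open scoped ComplexOrder

/-- The open unit polydisc in `ℂ^d`. -/
def polydisc (d : ℕ) : Set (Fin d → ℂ) := {z | ∀ j, ‖z j‖ < 1}

lemma polydisc_isOpen (d : ℕ) : IsOpen (polydisc d) := by
  have : polydisc d = ⋂ j : Fin d, {z : Fin d → ℂ | ‖z j‖ < 1} := by
    ext z; simp [polydisc]
  rw [this]
  exact isOpen_iInter_of_finite fun j =>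
    isOpen_lt (by fun_prop) continuous_const

/-- For `f : 𝔻^d → 𝔻` holomorphic with `f(0) = 0`, the sum of the absolute values
of the partial derivatives of `f` at `0` is at most `1`. -/
theorem sum_abs_partial_deriv_le_one
    (d : ℕ) (f : (Fin d → ℂ) → ℂ)
    (hf : DifferentiableOn ℂ f (polydisc d))
    (hmap : ∀ z ∈ polydisc d, ‖f z‖ < 1)
    (h0 : f 0 = 0) :
    ∑ j : Fin d, ‖fderiv ℂ f 0 (Pi.single j 1)‖ ≤ 1 := by
  set a : Fin d → ℂ := fun j => fderiv ℂ f 0 (Pi.single j 1) with ha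
  set c : Fin d → ℂ := fun j => if a j = 0 then 0 else (starRingEnd ℂ) (a j) / ‖a j‖ with hc
  have hc_norm : ∀ j, ‖c j‖ ≤ 1 := by
    intro j
    by_cases h : a j = 0
    · simp [hc, h]
    · simp only [hc, h, if_false]
      rw [norm_div]
      have h1 : ‖a j‖ ≠ 0 := norm_ne_zero_iff.mpr h
      simp only [RCLike.norm_conj, Complex.norm_real, Real.norm_eq_abs,
        abs_of_nonneg (norm_nonneg (a j)), div_self h1, le_refl]
  have hca : ∀ j, c j * a j = (‖a j‖ : ℂ) := by
    intro j
    by_cases h : a j = 0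
    · simp [hc, h]
    · simp only [hc, h, if_false]
      have h2 : (starRingEnd ℂ) (a j) * a j = (‖a j‖ : ℂ) ^ 2 := by
        rw [mul_comm, Complex.mul_conj]
        norm_cast
        rw [← Complex.sq_norm]
      have hn : (‖a j‖ : ℂ) ≠ 0 := by
        exact_mod_cast (norm_ne_zero_iff.mpr h)
      rw [div_mul_eq_mul_div, h2, sq, mul_div_assoc, div_self hn, mul_one]
  -- the line map
  set L : ℂ →L[ℂ] (Fin d → ℂ) := ContinuousLinearMap.toSpanSingleton ℂ c with hL
  have hLmaps : Set.MapsTo (fun w : ℂ => L w) (Metric.ball 0 1) (polydisc d) := by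
    intro w hw j
    simp only [hL, ContinuousLinearMap.toSpanSingleton_apply, Pi.smul_apply, smul_eq_mul,
      norm_mul]
    have hw1 : ‖w‖ < 1 := by simpa using hw
    calc ‖w‖ * ‖c j‖ ≤ ‖w‖ * 1 := by
          exact mul_le_mul_of_nonneg_left (hc_norm j) (norm_nonneg w)
      _ < 1 := by simpa using hw1
  set g : ℂ → ℂ := f ∘ (fun w => L w) with hg
  have hgd : DifferentiableOn ℂ g (Metric.ball 0 1) :=
    hf.comp (L.differentiable.differentiableOn) hLmaps
  have hg0 : g 0 = 0 := by simp [hg, h0]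
  have hgmaps : Set.MapsTo g (Metric.ball 0 1) (Metric.ball 0 1) := by
    intro w hw
    simpa [hg, Metric.mem_ball, dist_zero_right] using hmap _ (hLmaps hw)
  have hschwarz : ‖deriv g 0‖ ≤ 1 := by
    exact Complex.norm_deriv_le_one_of_mapsTo_ball (c := 0) (R := 1) hgd
      (by rw [hg0]; exact hgmaps.mono_right Metric.ball_subset_closedBall) one_pos
  have h0mem : (0 : Fin d → ℂ) ∈ polydisc d := by intro j; simp
  have hfat : DifferentiableAt ℂ f 0 :=
    (hf.differentiableAt ((polydisc_isOpen d).mem_nhds h0mem))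
  have hderiv : deriv g 0 = fderiv ℂ f 0 c := by
    have hcomp : HasFDerivAt g ((fderiv ℂ f 0).comp L) 0 := by
      have h1 : HasFDerivAt f (fderiv ℂ f 0) (L 0) := by
        simpa using hfat.hasFDerivAt
      exact h1.comp 0 L.hasFDerivAt
    rw [hcomp.hasDerivAt.deriv]
    simp [hL, ContinuousLinearMap.toSpanSingleton_apply]
  have hsum : fderiv ℂ f 0 c = ∑ j, (‖a j‖ : ℂ) := by
    have hcc : c = ∑ j, c j • (Pi.single j 1 : Fin d → ℂ) := by
      ext k
      rw [Finset.sum_apply]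
      simp [Pi.single_apply, mul_ite, Finset.sum_ite_eq']
    rw [hcc, map_sum]
    refine Finset.sum_congr rfl fun j _ => ?_
    rw [(fderiv ℂ f 0).map_smul, smul_eq_mul]
    exact hca j
  have : ‖deriv g 0‖ = ∑ j, ‖a j‖ := by
    rw [hderiv, hsum]
    rw [← Complex.ofReal_sum]
    rw [Complex.norm_real, Real.norm_eq_abs]
    exact abs_of_nonneg (Finset.sum_nonneg fun j _ => norm_nonneg _)
  rw [← this]
  exact hschwarz
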